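/- arXiv:2212.09434 — 3 statements merged into one kernel-verified Lean document; each statement's English description precedes it below -/
import Mathlib

section
/- Let Γ = Σ_ℓ μ_ℓ f_ℓ⊗f_ℓ be a positive self-adjoint compact operator on a separable Hilbert space H with orthonormal eigenbasis (f_ℓ) and eigenvalues μ₁ > μ₂ ≥ μ₃ ≥ ... ≥ 0. Set g₁ = √μ₁ f₁, ρ = √μ₁ − √μ₂, and let R(h) = ‖Γ − h⊗h‖_HS². Suppose 8η < ρ. Then for every g with ‖g − g₁‖_H < η and every x in H, the Hessian satisfies ⟨x, R̈(g)(x)⟩_H ≥ 4√μ₁ (ρ − 8η) ‖x‖_H², where R̈(g) = 4(‖g‖_H² I + 2 g⊗g − Γ). -/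
open MeasureTheory
open RealInnerProductSpace

/-- The rank-one operator `h ⊗ f : g ↦ ⟨h,g⟩_H • f`. -/
noncomputable def rankOne {H : Type*} [NormedAddCommGroup H] [InnerProductSpace ℝ H]
    (h f : H) : H →L[ℝ] H :=
  (innerSL ℝ h).smulRight f

lemma quad_bound {H : Type*} [NormedAddCommGroup H] [InnerProductSpace ℝ H] [CompleteSpace H]
    (f : HilbertBasis ℕ ℝ H) (μ : ℕ → ℝ) (hanti : Antitone μ)
    (Γ : H →L[ℝ] H) (hΓ : ∀ ℓ, Γ (f ℓ) = μ ℓ • (f ℓ : H)) (x : H) :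
    ⟪x, Γ x⟫ ≤ μ 1 * ‖x‖ ^ 2 + (μ 0 - μ 1) * ⟪(f 0 : H), x⟫ ^ 2 := by
  have h1 := f.hasSum_repr x
  have h2 := (h1.mapL Γ).mapL (innerSL ℝ x)
  have h3 : HasSum (fun i => μ i * ⟪(f i : H), x⟫ ^ 2) ⟪x, Γ x⟫ := by
    have he : (fun i => (innerSL ℝ x) (Γ (f.repr x i • f i)))
        = fun i => μ i * ⟪(f i : H), x⟫ ^ 2 := by
      funext i
      simp [hΓ, f.repr_apply_apply, real_inner_smul_right, real_inner_comm x]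
      ring
    rwa [he] at h2
  have hP : HasSum (fun i => ⟪(f i : H), x⟫ ^ 2) (‖x‖ ^ 2) := by
    have := f.hasSum_inner_mul_inner x x
    rw [real_inner_self_eq_norm_sq] at this
    simpa [sq, real_inner_comm x] using this
  have h0 : HasSum (fun i : ℕ => if i = 0 then ⟪(f 0 : H), x⟫ ^ 2 else 0)
      (⟪(f 0 : H), x⟫ ^ 2) := hasSum_ite_eq 0 _
  have hb := (hP.mul_left (μ 1)).add (h0.mul_left (μ 0 - μ 1))
  refine hasSum_le (fun i => ?_) h3 hb
  by_cases hi : i = 0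
  · subst hi; simp; ring_nf; nlinarith [sq_nonneg (⟪(f 0 : H), x⟫)]
  · simp only [hi, if_neg, mul_zero, add_zero, if_false]
    have : μ i ≤ μ 1 := hanti (Nat.one_le_iff_ne_zero.mpr hi)
    nlinarith [sq_nonneg (⟪(f i : H), x⟫)]

set_option maxHeartbeats 1000000 in
/-- Let `Γ = ∑_ℓ μ_ℓ f_ℓ ⊗ f_ℓ` with orthonormal eigenbasis `(f_ℓ)` and
eigenvalues `μ₀ > μ₁ ≥ μ₂ ≥ ... ≥ 0`. Set `g₁ = √μ₀ f₀` and `ρ = √μ₀ − √μ₁`,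
and suppose `8η < ρ`. Then for every `g` with `‖g − g₁‖ < η` and every `x`,
`⟨x, R̈(g)(x)⟩ ≥ 4√μ₀ (ρ − 8η) ‖x‖²`, where `R̈(g) = 4(‖g‖² I + 2 g⊗g − Γ)`. -/
theorem stmt6 {H : Type*} [NormedAddCommGroup H] [InnerProductSpace ℝ H] [CompleteSpace H]
    (f : HilbertBasis ℕ ℝ H) (μ : ℕ → ℝ)
    (hnn : ∀ ℓ, 0 ≤ μ ℓ) (hanti : Antitone μ) (hgap : μ 1 < μ 0)
    (Γ : H →L[ℝ] H) (hΓ : ∀ ℓ, Γ (f ℓ) = μ ℓ • (f ℓ : H))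
    (η : ℝ) (hη : 8 * η < Real.sqrt (μ 0) - Real.sqrt (μ 1))
    (g : H) (hg : ‖g - Real.sqrt (μ 0) • (f 0 : H)‖ < η) (x : H) :
    4 * Real.sqrt (μ 0) * ((Real.sqrt (μ 0) - Real.sqrt (μ 1)) - 8 * η) * ‖x‖ ^ 2 ≤
      ⟪x, ((4:ℝ) • (‖g‖ ^ 2 • ContinuousLinearMap.id ℝ H + (2:ℝ) • rankOne g g - Γ)) x⟫ := by
  have hexp : ⟪x, ((4:ℝ) • (‖g‖ ^ 2 • ContinuousLinearMap.id ℝ H + (2:ℝ) • rankOne g g - Γ)) x⟫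
      = 4 * (‖g‖ ^ 2 * ‖x‖ ^ 2 + 2 * ⟪g, x⟫ ^ 2 - ⟪x, Γ x⟫) := by
    simp [rankOne, ContinuousLinearMap.sub_apply, inner_sub_right, inner_add_right,
      real_inner_smul_right, real_inner_self_eq_norm_sq, real_inner_comm x g]
    ring
  rw [hexp]
  set a := Real.sqrt (μ 0) with ha
  set b := Real.sqrt (μ 1) with hb
  have ha2 : a ^ 2 = μ 0 := Real.sq_sqrt (hnn 0)
  have hb2 : b ^ 2 = μ 1 := Real.sq_sqrt (hnn 1)
  have hba : b ≤ a := Real.sqrt_le_sqrt hgap.le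
  have hb0 : (0:ℝ) ≤ b := Real.sqrt_nonneg _
  have hη0 : 0 < η := lt_of_le_of_lt (norm_nonneg _) hg
  have hηa : η < a := by nlinarith
  have hC := quad_bound f μ hanti Γ hΓ x
  rw [← ha2, ← hb2] at hC
  have hf0 : ‖(f 0 : H)‖ = 1 := f.orthonormal.1 0
  -- inner product deviation
  have hts : (⟪g, x⟫ - a * ⟪(f 0 : H), x⟫) ^ 2 ≤ η ^ 2 * ‖x‖ ^ 2 := by
    have h1 : ⟪g - a • (f 0 : H), x⟫ = ⟪g, x⟫ - a * ⟪(f 0 : H), x⟫ := by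
      rw [inner_sub_left, real_inner_smul_left]
    have h2 : |⟪g - a • (f 0 : H), x⟫| ≤ ‖g - a • (f 0 : H)‖ * ‖x‖ :=
      abs_real_inner_le_norm _ _
    rw [h1] at h2
    have h3 : ‖g - a • (f 0 : H)‖ * ‖x‖ ≤ η * ‖x‖ :=
      mul_le_mul_of_nonneg_right hg.le (norm_nonneg _)
    nlinarith [abs_nonneg (⟪g, x⟫ - a * ⟪(f 0 : H), x⟫), sq_abs (⟪g, x⟫ - a * ⟪(f 0 : H), x⟫),
      norm_nonneg x]
  -- norm of g
  have hgnorm : (a - η) ^ 2 ≤ ‖g‖ ^ 2 := by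
    have h1 : ‖a • (f 0 : H)‖ = a := by
      rw [norm_smul, hf0, mul_one, Real.norm_eq_abs, abs_of_nonneg (Real.sqrt_nonneg _)]
    have h2 : ‖a • (f 0 : H)‖ - ‖g‖ ≤ ‖a • (f 0 : H) - g‖ := norm_sub_norm_le _ _
    rw [norm_sub_rev, h1] at h2
    have h3 : a - η ≤ ‖g‖ := by linarith [hg.le]
    nlinarith [norm_nonneg g]
  -- Bessel for single coefficient
  have hs : ⟪(f 0 : H), x⟫ ^ 2 ≤ ‖x‖ ^ 2 := by
    have := abs_real_inner_le_norm (f 0 : H) x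
    rw [hf0, one_mul] at this
    nlinarith [abs_nonneg (⟪(f 0 : H), x⟫), sq_abs (⟪(f 0 : H), x⟫), norm_nonneg x]
  have k1 : a ^ 2 * ⟪(f 0 : H), x⟫ ^ 2 ≤ 2 * ⟪g, x⟫ ^ 2 + 2 * η ^ 2 * ‖x‖ ^ 2 := by
    nlinarith [hts, sq_nonneg (2 * ⟪g, x⟫ - a * ⟪(f 0 : H), x⟫)]
  have k3 : (a - η) ^ 2 * ‖x‖ ^ 2 ≤ ‖g‖ ^ 2 * ‖x‖ ^ 2 :=
    mul_le_mul_of_nonneg_right hgnorm (sq_nonneg _)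
  nlinarith [k1, k3, hC,
    mul_nonneg (mul_nonneg (sub_nonneg.mpr hba) hb0) (sub_nonneg.mpr hs),
    mul_nonneg (mul_nonneg hη0.le (by linarith : (0:ℝ) ≤ 6 * a - η)) (sq_nonneg ‖x‖),
    mul_nonneg (mul_nonneg hb0 (le_trans hb0 hba)) (sq_nonneg (⟪(f 0 : H), x⟫))]
end

section
/- Let φ(t) = exp(−1/(1−t²)) on (−1,1) (extended by 0) and define φ̃(t) = ϕ(4t−3) for t ∈ [1/2,1), −ϕ(4t−1) for t ∈ (0,1/2), and 0 otherwise. For p ≥ 3, take x = 1 if (p−1)/2 is an integer and x = (p−1)/(p−2) if p/2 is an integer, and set q = (p−1)/(2x) (an integer). Then with t_k = k/(p−1), the Riemann sum Σ_{k=0}^{p−1} φ̃(x t_k) equals 0. -/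
/-- The standard smooth bump function `φ(t) = exp(−1/(1−t²)) 1_{(−1,1)}(t)`. -/
noncomputable def bump (t : ℝ) : ℝ :=
  if -1 < t ∧ t < 1 then Real.exp (-1 / (1 - t ^ 2)) else 0

/-- The antisymmetric bump `φ̃`: `φ(4t−3)` on `[1/2,1)`, `−φ(4t−1)` on `(0,1/2)`,
and `0` elsewhere. -/
noncomputable def phiTilde (t : ℝ) : ℝ :=
  if 1/2 ≤ t ∧ t < 1 then bump (4 * t - 3)
  else if 0 < t ∧ t < 1/2 then -(bump (4 * t - 1))
  else 0

lemma bump_neg (t : ℝ) : bump (-t) = bump t := by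
  unfold bump
  have h2 : (-t) ^ 2 = t ^ 2 := by ring
  rw [h2]
  by_cases h : -1 < t ∧ t < 1
  · rw [if_pos h, if_pos ⟨by linarith [h.2], by linarith [h.1]⟩]
  · rw [if_neg h, if_neg]
    rintro ⟨h1, h2⟩
    exact h ⟨by linarith, by linarith⟩

lemma bump_neg_one : bump (-1) = 0 := by
  unfold bump
  rw [if_neg]
  rintro ⟨h1, _⟩; linarith

lemma phiTilde_of_nonpos (t : ℝ) (ht : t ≤ 0) : phiTilde t = 0 := by
  unfold phiTilde
  rw [if_neg (by rintro ⟨h, _⟩; linarith), if_neg (by rintro ⟨h, _⟩; linarith)]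

lemma phiTilde_of_one_le (t : ℝ) (ht : 1 ≤ t) : phiTilde t = 0 := by
  unfold phiTilde
  rw [if_neg (by rintro ⟨_, h⟩; linarith), if_neg (by rintro ⟨_, h⟩; linarith)]

lemma phiTilde_reflect (t : ℝ) : phiTilde (1 - t) = - phiTilde t := by
  rcases le_or_gt t 0 with h | h
  · rw [phiTilde_of_nonpos t h, phiTilde_of_one_le (1 - t) (by linarith), neg_zero]
  rcases le_or_gt 1 t with h1 | h1
  · rw [phiTilde_of_one_le t h1, phiTilde_of_nonpos (1 - t) (by linarith), neg_zero]
  rcases lt_trichotomy t (1/2) with h2 | h2 | h2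
  · -- 0 < t < 1/2, so 1 - t ∈ (1/2, 1)
    unfold phiTilde
    rw [if_pos ⟨by linarith, by linarith⟩, if_neg (by rintro ⟨h3, _⟩; linarith),
      if_pos ⟨h, h2⟩]
    have : 4 * (1 - t) - 3 = -(4 * t - 1) := by ring
    rw [this, bump_neg, neg_neg]
  · subst h2
    unfold phiTilde
    norm_num [bump_neg_one]
  · -- 1/2 < t < 1, so 1 - t ∈ (0, 1/2)
    unfold phiTilde
    rw [if_neg (by rintro ⟨h3, _⟩; linarith), if_pos ⟨by linarith, by linarith⟩,
      if_pos ⟨by linarith, h1⟩]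
    have : 4 * (1 - t) - 1 = -(4 * t - 3) := by ring
    rw [this, bump_neg]

/-- For `p ≥ 3`, with `x = 1` if `p` is odd and `x = (p−1)/(p−2)` if `p`
is even, and grid points `t_k = k/(p−1)`, the Riemann sum `∑_{k<p} φ̃(x t_k)` vanishes. -/
theorem stmt8 (p : ℕ) (hp : 3 ≤ p) (x : ℝ)
    (hx : (Odd p ∧ x = 1) ∨ (Even p ∧ x = ((p : ℝ) - 1) / ((p : ℝ) - 2))) :
    ∑ k ∈ Finset.range p, phiTilde (x * ((k : ℝ) / ((p : ℝ) - 1))) = 0 := by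
  have hp3 : (3 : ℝ) ≤ (p : ℝ) := by exact_mod_cast hp
  have hpne : ((p : ℝ) - 1) ≠ 0 := by linarith
  rcases hx with ⟨_, hx⟩ | ⟨_, hx⟩
  · subst hx
    set f : ℕ → ℝ := fun k => phiTilde (1 * ((k : ℝ) / ((p : ℝ) - 1))) with hf
    have hrefl := Finset.sum_range_reflect f p
    have hneg : ∑ j ∈ Finset.range p, f (p - 1 - j) = - ∑ j ∈ Finset.range p, f j := by
      rw [← Finset.sum_neg_distrib]
      refine Finset.sum_congr rfl fun j hj => ?_
      rw [Finset.mem_range] at hj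
      have hcast : ((p - 1 - j : ℕ) : ℝ) = (p : ℝ) - 1 - j := by
        rw [Nat.cast_sub (by omega), Nat.cast_sub (by omega : 1 ≤ p)]
        push_cast; ring
      simp only [hf, one_mul]
      rw [hcast]
      have : ((p : ℝ) - 1 - j) / ((p : ℝ) - 1) = 1 - (j : ℝ) / ((p : ℝ) - 1) := by
        field_simp
      rw [this, phiTilde_reflect]
    have := hrefl.symm.trans hneg
    linarith [this]
  · subst hx
    have hpne2 : ((p : ℝ) - 2) ≠ 0 := by linarith
    have harg : ∀ k : ℕ, ((p : ℝ) - 1) / ((p : ℝ) - 2) * ((k : ℝ) / ((p : ℝ) - 1))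
        = (k : ℝ) / ((p : ℝ) - 2) := by
      intro k; field_simp
    simp_rw [harg]
    set f : ℕ → ℝ := fun k => phiTilde ((k : ℝ) / ((p : ℝ) - 2)) with hf
    have hsum : ∑ k ∈ Finset.range p, f k
        = ∑ k ∈ Finset.range (p - 1), f k + f (p - 1) := by
      rw [← Finset.sum_range_succ]
      have h1 : p - 1 + 1 = p := by omega
      rw [h1]
    have hlast : f (p - 1) = 0 := by
      simp only [hf]
      apply phiTilde_of_one_le
      have hc : ((p - 1 : ℕ) : ℝ) = (p : ℝ) - 1 := by
        rw [Nat.cast_sub (by omega : 1 ≤ p)]; push_cast; ring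
      rw [hc, le_div_iff₀ (by linarith)]
      linarith
    have hrefl := Finset.sum_range_reflect f (p - 1)
    have hneg : ∑ j ∈ Finset.range (p - 1), f (p - 1 - 1 - j)
        = - ∑ j ∈ Finset.range (p - 1), f j := by
      rw [← Finset.sum_neg_distrib]
      refine Finset.sum_congr rfl fun j hj => ?_
      rw [Finset.mem_range] at hj
      have hcast : ((p - 1 - 1 - j : ℕ) : ℝ) = (p : ℝ) - 2 - j := by
        have h1 : p - 1 - 1 - j = p - 2 - j := by omega
        rw [h1, Nat.cast_sub (by omega), Nat.cast_sub (by omega : 2 ≤ p)]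
        push_cast; ring
      simp only [hf]
      rw [hcast]
      have : ((p : ℝ) - 2 - j) / ((p : ℝ) - 2) = 1 - (j : ℝ) / ((p : ℝ) - 2) := by
        field_simp
      rw [this, phiTilde_reflect]
    have hz := hrefl.symm.trans hneg
    rw [hsum, hlast, add_zero]
    linarith [hz]
end

section
/- Let μ₁ > 0, f₁, f̂ be unit vectors of a Hilbert space H with ⟨f̂,f₁⟩ ≥ 0, g₁ = √μ₁ f₁ and ĝ = ‖ĝ‖ f̂ any element of H with ⟨ĝ,g₁⟩ = ‖ĝ‖‖g₁‖⟨f̂,f₁⟩. If ‖ĝ − g₁‖ ≤ ‖g₁‖/2, then ‖f̂ − f₁‖² ≤ 2 ‖ĝ − g₁‖² / μ₁. -/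
open RealInnerProductSpace

/-- Let `μ₁ > 0`, `f₁, f̂` unit vectors with `⟨f̂,f₁⟩ ≥ 0`,
`g₁ = √μ₁ f₁` and `ĝ = ‖ĝ‖ f̂`. If `‖ĝ − g₁‖ ≤ ‖g₁‖/2`, then
`‖f̂ − f₁‖² ≤ 2‖ĝ − g₁‖²/μ₁`. -/
theorem stmt16 {H : Type*} [NormedAddCommGroup H] [InnerProductSpace ℝ H]
    (μ₁ : ℝ) (hμ : 0 < μ₁) (f₁ fh g₁ gh : H)
    (hf₁ : ‖f₁‖ = 1) (hfh : ‖fh‖ = 1) (hpos : 0 ≤ ⟪fh, f₁⟫)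
    (hg₁ : g₁ = Real.sqrt μ₁ • f₁) (hgh : gh = ‖gh‖ • fh)
    (hclose : ‖gh - g₁‖ ≤ ‖g₁‖ / 2) :
    ‖fh - f₁‖ ^ 2 ≤ 2 * ‖gh - g₁‖ ^ 2 / μ₁ := by
  have hs : Real.sqrt μ₁ ^ 2 = μ₁ := Real.sq_sqrt hμ.le
  have hb : ‖g₁‖ = Real.sqrt μ₁ := by
    rw [hg₁, norm_smul, hf₁, Real.norm_eq_abs, abs_of_nonneg (Real.sqrt_nonneg _), mul_one]
  have hinner : ⟪gh, g₁⟫ = ‖gh‖ * ‖g₁‖ * ⟪fh, f₁⟫ := by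
    rw [hb]
    conv_lhs => rw [hgh, hg₁]
    rw [real_inner_smul_left, real_inner_smul_right]
    ring
  have hf : ‖fh - f₁‖ ^ 2 = 2 - 2 * ⟪fh, f₁⟫ := by
    rw [@norm_sub_sq_real, hf₁, hfh]; ring
  have hg : ‖gh - g₁‖ ^ 2 = ‖gh‖ ^ 2 + ‖g₁‖ ^ 2 - 2 * (‖gh‖ * ‖g₁‖ * ⟪fh, f₁⟫) := by
    rw [@norm_sub_sq_real, hinner]; ring
  have ha : ‖g₁‖ / 2 ≤ ‖gh‖ := by
    have := norm_sub_norm_le g₁ gh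
    rw [norm_sub_rev] at this
    linarith
  have hb2 : ‖g₁‖ ^ 2 = μ₁ := by rw [hb, hs]
  have hkey : μ₁ / 2 * ‖fh - f₁‖ ^ 2 ≤ ‖gh - g₁‖ ^ 2 := by
    have hfnn : (0:ℝ) ≤ ‖fh - f₁‖ ^ 2 := sq_nonneg _
    have hbnn : (0:ℝ) ≤ ‖g₁‖ := norm_nonneg _
    nlinarith [sq_nonneg (‖gh‖ - ‖g₁‖), mul_le_mul_of_nonneg_left ha hbnn]
  rw [le_div_iff₀ hμ]
  linarith
end
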